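/- In any sequence of points (x_1, ..., x_τ) with τ ≥ d := dim_E(F, β), there exists some index j ≤ τ such that x_j is β-dependent with respect to F on at least τ/d − 1 disjoint subsequences of (x_1, ..., x_{j−1}). -/

import Mathlib

/-- `x` is `ε`-dependent on the list `Z` with respect to the class `F`. -/
def EpsDependent {α : Type*} (F : Set (α → ℝ)) (ε : ℝ) (Z : List α) (x : α) : Prop :=
  ∀ f ∈ F, ∀ f' ∈ F,
    Real.sqrt ((Z.map fun z => (f z - f' z) ^ 2).sum) ≤ ε → |f x - f' x| ≤ ε

/-- `L` is an eluder sequence at scale `β`: for some `ε' ≥ β`, every element of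
`L` is `ε'`-independent of its predecessors. -/
def EluderSeq {α : Type*} (F : Set (α → ℝ)) (β : ℝ) (L : List α) : Prop :=
  ∃ ε' ≥ β, ∀ i : Fin L.length, ¬ EpsDependent F ε' (L.take i.1) (L.get i)

/-- `x` is `β`-dependent (w.r.t. `F`) on the subsequence of `L` indexed by the
finite index set `S`. -/
def EpsDependentIdx {α : Type*} (F : Set (α → ℝ)) (β : ℝ) (L : List α)
    (S : Finset (Fin L.length)) (x : α) : Prop :=
  ∀ f ∈ F, ∀ f' ∈ F,
    Real.sqrt (∑ i ∈ S, (f (L.get i) - f' (L.get i)) ^ 2) ≤ β → |f x - f' x| ≤ β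

/-- If every element of an index set `S` is `β`-independent of its predecessors
within `S`, then the corresponding sublist is an eluder sequence, hence
`S.card ≤ d`. -/
lemma card_le_of_indep {α : Type*} (F : Set (α → ℝ)) (β : ℝ) (d : ℕ)
    (hdim : ∀ L : List α, EluderSeq F β L → L.length ≤ d)
    (L : List α) (S : Finset (Fin L.length))
    (hS : ∀ k ∈ S, ¬ EpsDependentIdx F β L (S.filter (fun k' => k' < k)) (L.get k)) :
    S.card ≤ d := by
  classical
  set l := S.sort (· ≤ ·) with hldef
  have hnodup : l.Nodup := S.sort_nodup _
  have hsorted : l.SortedLT := S.sortedLT_sort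
  have hmem : ∀ k, k ∈ l ↔ k ∈ S := fun k => S.mem_sort _
  have hlen : l.length = S.card := S.length_sort _
  have key : EluderSeq F β (l.map L.get) := by
    refine ⟨β, le_refl β, ?_⟩
    intro i hdep
    have hi : i.1 < l.length := by simpa using i.2
    set k := l.get ⟨i.1, hi⟩ with hk
    have hkS : k ∈ S := by rw [hk, ← hmem]; exact List.get_mem _ _
    apply hS k hkS
    intro f hf f' hf' hsum
    have hget : (l.map L.get).get i = L.get k := by
      simp [List.getElem_map, hk]
    rw [← hget]
    apply hdep f hf f' hf'
    -- identify the two sums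
    have hsetEq : (l.take i.1).toFinset = S.filter (fun k' => k' < k) := by
      ext k'
      simp only [List.mem_toFinset, Finset.mem_filter]
      constructor
      · intro hmem'
        obtain ⟨p, hp, hpe⟩ := List.mem_take_iff_getElem.1 hmem'
        have hpl : p < l.length := lt_of_lt_of_le hp (min_le_right _ _)
        constructor
        · exact (hmem k').1 (hpe ▸ List.getElem_mem hpl)
        · have : l.get ⟨p, hpl⟩ < l.get ⟨i.1, hi⟩ := by
            apply hsorted.strictMono_get
            simp only [Fin.mk_lt_mk]
            exact lt_of_lt_of_le hp (min_le_left _ _)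
          simpa [hpe, ← hk] using (hpe ▸ this : _)
      · rintro ⟨hk'S, hk'lt⟩
        obtain ⟨p, hpl, hpe⟩ := List.getElem_of_mem ((hmem k').2 hk'S)
        have hpi : p < i.1 := by
          by_contra hcon
          push_neg at hcon
          rcases lt_or_eq_of_le hcon with hlt | heq
          · have hlt2 : l.get ⟨i.1, hi⟩ < l.get ⟨p, hpl⟩ := by
              apply hsorted.strictMono_get
              simpa using hlt
            have hpe' : l.get ⟨p, hpl⟩ = k' := by simpa using hpe
            rw [hpe'] at hlt2
            exact absurd hk'lt (not_lt.2 (le_of_lt (hk ▸ hlt2)))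
          · apply absurd hk'lt
            simp [hk, ← heq, ← hpe]
        exact List.mem_take_iff_getElem.2 ⟨p, lt_min hpi hpl, hpe⟩
    have hnd : (l.take i.1).Nodup := hnodup.sublist (List.take_sublist _ _)
    have hsumEq : (((l.map L.get).take i.1).map fun z => (f z - f' z) ^ 2).sum
        = ∑ k' ∈ S.filter (fun k' => k' < k), (f (L.get k') - f' (L.get k')) ^ 2 := by
      rw [← hsetEq, List.sum_toFinset _ hnd, ← List.map_take, List.map_map]
      rfl
    rw [hsumEq]
    exact hsum
  have := hdim _ key
  simpa [hlen] using this

/-- In any sequence `L` of length `τ ≥ d`, where `d` bounds the `β`-eluder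
dimension of `F`, some element `L.get j` is `β`-dependent on at least
`τ/d − 1` pairwise disjoint subsequences of its predecessors. -/
theorem exists_heavily_dependent_element {α : Type*} (F : Set (α → ℝ)) (β : ℝ)
    (d : ℕ) (hd : 0 < d)
    (hdim : ∀ L : List α, EluderSeq F β L → L.length ≤ d)
    (L : List α) (hL : d ≤ L.length) :
    ∃ j : Fin L.length, ∃ m : ℕ, (L.length : ℝ) / d - 1 ≤ (m : ℝ) ∧
      ∃ S : Fin m → Finset (Fin L.length),
        (∀ i, ∀ k ∈ S i, (k : ℕ) < (j : ℕ)) ∧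
        (∀ i i', i ≠ i' → Disjoint (S i) (S i')) ∧
        ∀ i, EpsDependentIdx F β L (S i) (L.get j) := by
  classical
  have hτpos : 0 < L.length := lt_of_lt_of_le hd hL
  set K := (L.length - 1) / d with hKdef
  have hd' : (0 : ℝ) < (d : ℝ) := by exact_mod_cast hd
  -- the key numeric bound
  have hKbig : (L.length : ℝ) / d - 1 ≤ (K : ℝ) := by
    have hKd : L.length ≤ (K + 1) * d := by
      have h1 : d * K + (L.length - 1) % d = L.length - 1 := Nat.div_add_mod _ _
      have h2 : (L.length - 1) % d < d := Nat.mod_lt _ hd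
      calc L.length = (L.length - 1) + 1 := by omega
        _ = d * K + (L.length - 1) % d + 1 := by rw [h1]
        _ ≤ d * K + d := by omega
        _ = (K + 1) * d := by ring
    have : (L.length : ℝ) ≤ ((K : ℝ) + 1) * d := by exact_mod_cast hKd
    have := (div_le_iff₀ hd').mpr this
    linarith
  have main : ∀ t, t ≤ L.length →
      (∃ B : Fin K → Finset (Fin L.length),
        (∀ i, ∀ k ∈ B i, (k : ℕ) < t) ∧
        (∀ i i', i ≠ i' → Disjoint (B i) (B i')) ∧
        (∀ k : Fin L.length, (k : ℕ) < t → ∃ i, k ∈ B i) ∧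
        (∀ i, ∀ k ∈ B i,
          ¬ EpsDependentIdx F β L ((B i).filter (fun k' => k' < k)) (L.get k)))
      ∨ (∃ j : Fin L.length, ∃ m : ℕ, (L.length : ℝ) / d - 1 ≤ (m : ℝ) ∧
        ∃ S : Fin m → Finset (Fin L.length),
          (∀ i, ∀ k ∈ S i, (k : ℕ) < (j : ℕ)) ∧
          (∀ i i', i ≠ i' → Disjoint (S i) (S i')) ∧
          ∀ i, EpsDependentIdx F β L (S i) (L.get j)) := by
    intro t
    induction t with
    | zero =>
      intro _
      left
      exact ⟨fun _ => ∅, by simp, by simp, fun k hk => absurd hk (by omega), by simp⟩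
    | succ t ih =>
      intro ht
      rcases ih (Nat.le_of_succ_le ht) with ⟨B, hB1, hB2, hB3, hB4⟩ | hgoal
      · have htlt : t < L.length := ht
        set j : Fin L.length := ⟨t, htlt⟩ with hjdef
        by_cases hall : ∀ i, EpsDependentIdx F β L (B i) (L.get j)
        · right
          refine ⟨j, K, hKbig, B, ?_, hB2, hall⟩
          intro i k hk
          exact hB1 i k hk
        · push_neg at hall
          obtain ⟨i₀, hi₀⟩ := hall
          left
          refine ⟨Function.update B i₀ (insert j (B i₀)), ?_, ?_, ?_, ?_⟩
          · intro i k hk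
            by_cases hii : i = i₀
            · subst hii
              rw [Function.update_self] at hk
              rcases Finset.mem_insert.1 hk with h | h
              · subst h; simp [hjdef]
              · exact Nat.lt_succ_of_lt (hB1 _ _ h)
            · rw [Function.update_of_ne hii] at hk
              exact Nat.lt_succ_of_lt (hB1 _ _ hk)
          · intro i i' hii
            have hjnot : ∀ i'', j ∉ B i'' := by
              intro i'' hmem
              exact absurd (hB1 i'' j hmem) (by simp [hjdef])
            by_cases h1 : i = i₀ <;> by_cases h2 : i' = i₀
            · exact absurd (h1.trans h2.symm) hii
            · subst h1
              rw [Function.update_self, Function.update_of_ne h2]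
              rw [Finset.disjoint_insert_left]
              exact ⟨hjnot i', hB2 _ _ hii⟩
            · subst h2
              rw [Function.update_self, Function.update_of_ne h1]
              rw [Finset.disjoint_insert_right]
              exact ⟨hjnot i, hB2 _ _ hii⟩
            · rw [Function.update_of_ne h1, Function.update_of_ne h2]
              exact hB2 _ _ hii
          · intro k hk
            rcases Nat.lt_succ_iff_lt_or_eq.1 hk with h | h
            · obtain ⟨i, hi⟩ := hB3 k h
              refine ⟨i, ?_⟩
              by_cases hii : i = i₀
              · subst hii
                rw [Function.update_self]
                exact Finset.mem_insert_of_mem hi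
              · rw [Function.update_of_ne hii]
                exact hi
            · refine ⟨i₀, ?_⟩
              rw [Function.update_self]
              have : k = j := Fin.ext h
              subst this
              exact Finset.mem_insert_self _ _
          · intro i k hk
            by_cases hii : i = i₀
            · subst hii
              rw [Function.update_self] at hk ⊢
              rcases Finset.mem_insert.1 hk with h | h
              · subst h
                have hfe : (insert j (B i)).filter (fun k' => k' < j) = B i := by
                  ext k'
                  simp only [Finset.mem_filter, Finset.mem_insert]
                  constructor
                  · rintro ⟨h1 | h1, h2⟩
                    · exact absurd h2 (by simp [h1])
                    · exact h1
                  · intro h1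
                    exact ⟨Or.inr h1, by
                      have := hB1 i k' h1
                      simpa [Fin.lt_def, hjdef] using this⟩
                rw [hfe]
                exact hi₀
              · have hfe : (insert j (B i)).filter (fun k' => k' < k)
                    = (B i).filter (fun k' => k' < k) := by
                  ext k'
                  simp only [Finset.mem_filter, Finset.mem_insert]
                  constructor
                  · rintro ⟨h1 | h1, h2⟩
                    · exfalso
                      subst h1
                      have h2' : t < (k : ℕ) := by
                        simpa [Fin.lt_def, hjdef] using h2
                      have h3' := hB1 i k h
                      omega
                    · exact ⟨h1, h2⟩
                  · rintro ⟨h1, h2⟩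
                    exact ⟨Or.inr h1, h2⟩
                rw [hfe]
                exact hB4 i k h
            · rw [Function.update_of_ne hii] at hk ⊢
              exact hB4 i k hk
      · right; exact hgoal
  rcases main L.length le_rfl with ⟨B, _, hB2, hB3, hB4⟩ | hgoal
  · exfalso
    have hcard : ∀ i, (B i).card ≤ d := by
      intro i
      exact card_le_of_indep F β d hdim L (B i) (hB4 i)
    have hcover : (Finset.univ : Finset (Fin L.length))
        ⊆ Finset.univ.biUnion B := by
      intro k _
      obtain ⟨i, hi⟩ := hB3 k k.2
      exact Finset.mem_biUnion.2 ⟨i, Finset.mem_univ _, hi⟩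
    have h1 : L.length ≤ (Finset.univ.biUnion B).card := by
      have := Finset.card_le_card hcover
      simpa using this
    have h2 : (Finset.univ.biUnion B).card = ∑ i, (B i).card :=
      Finset.card_biUnion (fun x _ y _ hxy => hB2 x y hxy)
    have h3 : ∑ i, (B i).card ≤ K * d := by
      have := Finset.sum_le_card_nsmul Finset.univ (fun i => (B i).card) d
        (fun i _ => hcard i)
      simpa [mul_comm, Finset.card_univ] using this
    have h4 : K * d ≤ L.length - 1 := Nat.div_mul_le_self _ _
    omega
  · exact hgoal
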